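/- Let N and E be powers of two with 1 ≤ E ≤ N/2, let U' and V' be finite sets each of cardinality N, let U₁, …, U_E be a partition of U' into E sets each of cardinality N/E, and let a : U' × V' → ℝ be any function. Then there exist subsets V₁, …, V_E of V', each of cardinality N/E, such that, writing S = ⋃_{j ≤ E} (U_j × V_j), the average of a over S is at least the average of a over U' × V'; that is, (1/|S|)·∑_{(u,v) ∈ S} a(u,v) ≥ (1/(N·N))·∑_{(u,v) ∈ U' × V'} a(u,v). -/

import Mathlib

/-- Any finset of cardinality `E * k` can be partitioned into `E` parts of size `k`. -/
lemma exists_equipartition {α : Type*} [DecidableEq α] (s : Finset α) (E k : ℕ)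
    (h : s.card = E * k) :
    ∃ W : Fin E → Finset α, (∀ i, W i ⊆ s) ∧ (∀ i, (W i).card = k) ∧
      (∀ i j, i ≠ j → Disjoint (W i) (W j)) ∧ Finset.univ.biUnion W = s := by
  classical
  let f : s ≃ Fin E × Fin k :=
    s.equivFin.trans ((finCongr h).trans finProdFinEquiv.symm)
  refine ⟨fun i => (Finset.univ.filter fun x : s => (f x).1 = i).image Subtype.val,
    ?_, ?_, ?_, ?_⟩
  · intro i x hx
    simp only [Finset.mem_image, Finset.mem_filter] at hx
    obtain ⟨y, _, rfl⟩ := hx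
    exact y.2
  · intro i
    rw [Finset.card_image_of_injective _ Subtype.val_injective]
    conv_rhs => rw [← Fintype.card_fin k, ← Finset.card_univ]
    refine Finset.card_bij' (fun x _ => (f x).2) (fun y _ => f.symm (i, y)) ?_ ?_ ?_ ?_
    · intro x hx; exact Finset.mem_univ _
    · intro y hy
      simp
    · intro x hx
      simp only [Finset.mem_filter, Finset.mem_univ, true_and] at hx
      have h2 : (i, (f x).2) = f x := by rw [← hx]
      show f.symm (i, (f x).2) = x
      rw [h2, Equiv.symm_apply_apply]
    · intro y hy
      simp
  · intro i j hij
    rw [Finset.disjoint_left]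
    intro x hx hx'
    simp only [Finset.mem_image, Finset.mem_filter, Finset.mem_univ, true_and] at hx hx'
    obtain ⟨y, hy, rfl⟩ := hx
    obtain ⟨z, hz, hzy⟩ := hx'
    have : z = y := Subtype.ext hzy
    subst this
    exact hij (by rw [← hy, ← hz])
  · ext x
    simp only [Finset.mem_biUnion, Finset.mem_univ, true_and, Finset.mem_image,
      Finset.mem_filter]
    constructor
    · rintro ⟨i, y, _, rfl⟩; exact y.2
    · intro hx
      exact ⟨(f ⟨x, hx⟩).1, ⟨x, hx⟩, rfl, rfl⟩


/-- the paper's Lemma 9: for powers of two `1 ≤ E ≤ N/2`, finite sets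
`U'`, `V'` of size `N`, a partition `U₁, …, U_E` of `U'` into sets of size `N/E`, and
any `a : U' × V' → ℝ`, there exist subsets `V₁, …, V_E ⊆ V'` of size `N/E` such that,
with `S = ⋃_j U_j × V_j`, the average of `a` over `S` is at least its average over
`U' × V'`. -/
theorem stmt_6 {α : Type*} [DecidableEq α] (N E : ℕ)
    (hNpow : ∃ p : ℕ, N = 2 ^ p) (hEpow : ∃ q : ℕ, E = 2 ^ q)
    (hE1 : 1 ≤ E) (hEN : E ≤ N / 2)
    (U' V' : Finset α) (hU' : U'.card = N) (hV' : V'.card = N)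
    (U : Fin E → Finset α)
    (hUdisj : ∀ j j' : Fin E, j ≠ j' → Disjoint (U j) (U j'))
    (hUunion : Finset.univ.biUnion U = U')
    (hUcard : ∀ j, (U j).card = N / E)
    (a : α → α → ℝ) :
    ∃ V : Fin E → Finset α,
      (∀ j, V j ⊆ V') ∧ (∀ j, (V j).card = N / E) ∧
      (1 / ((Finset.univ.biUnion (fun j : Fin E => U j ×ˢ V j)).card : ℝ)) *
          ∑ p ∈ Finset.univ.biUnion (fun j : Fin E => U j ×ˢ V j), a p.1 p.2 ≥
        (1 / ((N : ℝ) * N)) * ∑ u ∈ U', ∑ v ∈ V', a u v := by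

  classical
  have hdvd : E ∣ N := by
    obtain ⟨p, rfl⟩ := hNpow
    obtain ⟨q, rfl⟩ := hEpow
    refine pow_dvd_pow 2 ?_
    by_contra hc
    push_neg at hc
    have : 2 ^ p < 2 ^ q := Nat.pow_lt_pow_right one_lt_two hc
    have h2 : 2 ^ p / 2 ≤ 2 ^ p := Nat.div_le_self _ _
    omega
  set k := N / E with hk
  have hEk : E * k = N := Nat.mul_div_cancel' hdvd
  have hEpos : 0 < E := hE1
  have hNpos : 0 < N := by
    obtain ⟨p, rfl⟩ := hNpow
    exact pow_pos two_pos p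
  have hkpos : 0 < k := Nat.div_pos (Nat.le_of_dvd hNpos hdvd) hEpos
  -- partition V' into E blocks of size k
  obtain ⟨W, hWsub, hWcard, hWdisj, hWunion⟩ :=
    exists_equipartition V' E k (by rw [hV', hEk])
  -- choose the best block for each j
  have hex : ∀ j : Fin E, ∃ i : Fin E, ∀ i' : Fin E,
      (∑ u ∈ U j, ∑ v ∈ W i', a u v) ≤ ∑ u ∈ U j, ∑ v ∈ W i, a u v := by
    intro j
    obtain ⟨i, _, hi⟩ := Finset.exists_max_image Finset.univ
      (fun i => ∑ u ∈ U j, ∑ v ∈ W i, a u v) ⟨⟨0, hEpos⟩, Finset.mem_univ _⟩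
    exact ⟨i, fun i' => hi i' (Finset.mem_univ _)⟩
  choose c hc using hex
  refine ⟨fun j => W (c j), fun j => hWsub _, fun j => hWcard _, ?_⟩
  set V : Fin E → Finset α := fun j => W (c j) with hV
  set S := Finset.univ.biUnion (fun j : Fin E => U j ×ˢ V j) with hS
  -- blocks are pairwise disjoint
  have hblockdisj : ∀ j ∈ (Finset.univ : Finset (Fin E)), ∀ j' ∈ Finset.univ,
      j ≠ j' → Disjoint ((fun j => U j ×ˢ V j) j) ((fun j => U j ×ˢ V j) j') := by
    intro j _ j' _ hjj'
    rw [Finset.disjoint_left]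
    rintro ⟨u, v⟩ huv huv'
    simp only [Finset.mem_product] at huv huv'
    exact (Finset.disjoint_left.mp (hUdisj j j' hjj')) huv.1 huv'.1
  -- cardinality of S
  have hScard : S.card = E * (k * k) := by
    rw [hS, Finset.card_biUnion hblockdisj]
    simp only [Finset.card_product, hUcard, hV, hWcard]
    rw [Finset.sum_const, Finset.card_univ, Fintype.card_fin, smul_eq_mul]
  -- sum over S
  have hSsum : ∑ pp ∈ S, a pp.1 pp.2 = ∑ j : Fin E, ∑ u ∈ U j, ∑ v ∈ V j, a u v := by
    rw [hS, Finset.sum_biUnion hblockdisj]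
    exact Finset.sum_congr rfl fun j _ =>
      Finset.sum_product (U j) (V j) (fun pp => a pp.1 pp.2)
  -- total sum decomposition over the U-partition
  have hT : ∑ u ∈ U', ∑ v ∈ V', a u v
      = ∑ j : Fin E, ∑ u ∈ U j, ∑ v ∈ V', a u v := by
    rw [← hUunion, Finset.sum_biUnion (fun j _ j' _ h => hUdisj j j' h)]
  -- sum over V' decomposes over the W-partition
  have hWsum : ∀ g : α → ℝ, ∑ v ∈ V', g v = ∑ i : Fin E, ∑ v ∈ W i, g v := by
    intro g
    rw [← hWunion, Finset.sum_biUnion (fun i _ i' _ h => hWdisj i i' h)]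
  -- key inequality: E * blocksum ≥ rowsum
  have hkey : ∀ j : Fin E, (∑ u ∈ U j, ∑ v ∈ V', a u v)
      ≤ E * ∑ u ∈ U j, ∑ v ∈ V j, a u v := by
    intro j
    have h1 : ∑ u ∈ U j, ∑ v ∈ V', a u v
        = ∑ i : Fin E, ∑ u ∈ U j, ∑ v ∈ W i, a u v := by
      calc ∑ u ∈ U j, ∑ v ∈ V', a u v
          = ∑ u ∈ U j, ∑ i : Fin E, ∑ v ∈ W i, a u v :=
            Finset.sum_congr rfl fun u _ => hWsum (a u)
        _ = ∑ i : Fin E, ∑ u ∈ U j, ∑ v ∈ W i, a u v := Finset.sum_comm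
    rw [h1]
    calc ∑ i : Fin E, ∑ u ∈ U j, ∑ v ∈ W i, a u v
        ≤ ∑ _i : Fin E, ∑ u ∈ U j, ∑ v ∈ W (c j), a u v :=
          Finset.sum_le_sum fun i _ => hc j i
      _ = E * ∑ u ∈ U j, ∑ v ∈ V j, a u v := by
          rw [Finset.sum_const, Finset.card_univ, Fintype.card_fin, nsmul_eq_mul]
  have hmain : (∑ u ∈ U', ∑ v ∈ V', a u v) ≤ E * ∑ pp ∈ S, a pp.1 pp.2 := by
    rw [hT, hSsum, Finset.mul_sum]
    exact Finset.sum_le_sum fun j _ => hkey j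
  -- final arithmetic
  rw [ge_iff_le]
  have hScard' : (S.card : ℝ) = E * (k * k) := by exact_mod_cast hScard
  have hNk : (N : ℝ) = E * k := by exact_mod_cast hEk.symm
  have hEr : (0 : ℝ) < E := by exact_mod_cast hEpos
  have hkr : (0 : ℝ) < k := by exact_mod_cast hkpos
  have h2 : (1:ℝ)/(((E:ℝ)*k)*((E:ℝ)*k)) * (∑ u ∈ U', ∑ v ∈ V', a u v)
      = (1/((E:ℝ)*(k*k))) * ((1/(E:ℝ)) * ∑ u ∈ U', ∑ v ∈ V', a u v) := by
    have h3 : ((E:ℝ)*k)*((E:ℝ)*k) = ((E:ℝ)*(k*k))*E := by ring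
    simp only [one_div]
    rw [h3, mul_inv, mul_assoc]
  rw [hScard', hNk, h2]
  apply mul_le_mul_of_nonneg_left ?_ (by positivity)
  rw [one_div_mul_eq_div, div_le_iff₀ hEr]
  linarith [hmain]
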